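/- Let U, H be Hopf algebras, R : H ⊗ U → U ⊗ H a normal, multiplicative coalgebra map, and B a unital algebra. Let α : U → B be an algebra homomorphism and η : H → B a partial representation of H such that η(h)α(u) = α(u^R)η(h^R) for all u ∈ U, h ∈ H. Define the linear map π : U ⊗ H → B by π(u ⊗ h) = α(u)η(h). Then for all u, v ∈ U and h, k ∈ H: π(v ⊗ k)·π(S_U(u₍₁₎)^R ⊗ S_H(h₍₁₎)^R)·π(u₍₂₎ ⊗ h₍₂₎) = π(v·S_U(u₍₁₎)^{Rr} ⊗ k^r·S_H(h₍₁₎)^R)·π(u₍₂₎ ⊗ h₍₂₎), which is axiom (PR4) of a partial representation for the smash product Hopf algebra U #_R H evaluated on elements v ⊗ k and u ⊗ h. -/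

import Mathlib

open TensorProduct

noncomputable section

variable {k : Type*} [Field k]
variable {U : Type*} [Ring U] [HopfAlgebra k U]
variable {H : Type*} [Ring H] [HopfAlgebra k H]

/-- The tensor product comultiplication on `A ⊗ B`:
`a ⊗ b ↦ (a₍₁₎ ⊗ b₍₁₎) ⊗ (a₍₂₎ ⊗ b₍₂₎)`. -/
def comulTP (k A B : Type*) [Field k] [Ring A] [HopfAlgebra k A] [Ring B] [HopfAlgebra k B] :
    A ⊗[k] B →ₗ[k] (A ⊗[k] B) ⊗[k] (A ⊗[k] B) :=
  (TensorProduct.tensorTensorTensorComm k A A B B).toLinearMap ∘ₗ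
    TensorProduct.map (Coalgebra.comul (R := k)) (Coalgebra.comul (R := k))

/-- The tensor product counit on `A ⊗ B`: `a ⊗ b ↦ ε(a)ε(b)`. -/
def counitTP (k A B : Type*) [Field k] [Ring A] [HopfAlgebra k A] [Ring B] [HopfAlgebra k B] :
    A ⊗[k] B →ₗ[k] k :=
  (TensorProduct.lid k k).toLinearMap ∘ₗ
    TensorProduct.map (Coalgebra.counit (R := k)) (Coalgebra.counit (R := k))

/-- `R` is left normal: `R(h ⊗ 1_U) = 1_U ⊗ h`. -/
def LeftNormal (R : H ⊗[k] U →ₗ[k] U ⊗[k] H) : Prop :=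
  ∀ h : H, R (h ⊗ₜ[k] (1 : U)) = (1 : U) ⊗ₜ[k] h

/-- `R` is right normal: `R(1_H ⊗ u) = u ⊗ 1_H`. -/
def RightNormal (R : H ⊗[k] U →ₗ[k] U ⊗[k] H) : Prop :=
  ∀ u : U, R ((1 : H) ⊗ₜ[k] u) = u ⊗ₜ[k] (1 : H)

/-- `R` is left multiplicative: `u^R ⊗ (hh')^R = (u^R)^r ⊗ h^r(h')^R`,
as an equality of linear maps `(H ⊗ H) ⊗ U → U ⊗ H`. -/
def LeftMult (R : H ⊗[k] U →ₗ[k] U ⊗[k] H) : Prop :=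
  R ∘ₗ TensorProduct.map (LinearMap.mul' k H) (LinearMap.id : U →ₗ[k] U) =
    TensorProduct.map (LinearMap.id : U →ₗ[k] U) (LinearMap.mul' k H) ∘ₗ
      (TensorProduct.assoc k U H H).toLinearMap ∘ₗ
      TensorProduct.map R (LinearMap.id : H →ₗ[k] H) ∘ₗ
      (TensorProduct.assoc k H U H).symm.toLinearMap ∘ₗ
      TensorProduct.map (LinearMap.id : H →ₗ[k] H) R ∘ₗ
      (TensorProduct.assoc k H H U).toLinearMap

/-- `R` is right multiplicative: `(uu')^R ⊗ h^R = u^R(u')^r ⊗ (h^R)^r`,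
as an equality of linear maps `H ⊗ (U ⊗ U) → U ⊗ H`. -/
def RightMult (R : H ⊗[k] U →ₗ[k] U ⊗[k] H) : Prop :=
  R ∘ₗ TensorProduct.map (LinearMap.id : H →ₗ[k] H) (LinearMap.mul' k U) =
    TensorProduct.map (LinearMap.mul' k U) (LinearMap.id : H →ₗ[k] H) ∘ₗ
      (TensorProduct.assoc k U U H).symm.toLinearMap ∘ₗ
      TensorProduct.map (LinearMap.id : U →ₗ[k] U) R ∘ₗ
      (TensorProduct.assoc k U H U).toLinearMap ∘ₗ
      TensorProduct.map R (LinearMap.id : U →ₗ[k] U) ∘ₗ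
      (TensorProduct.assoc k H U U).symm.toLinearMap

/-- `R` is a coalgebra map for the tensor product coalgebra structures. -/
def IsCoalgMap (R : H ⊗[k] U →ₗ[k] U ⊗[k] H) : Prop :=
  counitTP k U H ∘ₗ R = counitTP k H U ∧
    comulTP k U H ∘ₗ R = TensorProduct.map R R ∘ₗ comulTP k H U

/-- The left action `h ⊗ u ↦ h ▷ u = ε_H(h^R)u^R`, as a linear map `H ⊗ U → U`. -/
def lact (R : H ⊗[k] U →ₗ[k] U ⊗[k] H) : H ⊗[k] U →ₗ[k] U :=
  (TensorProduct.rid k U).toLinearMap ∘ₗ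
    TensorProduct.map (LinearMap.id : U →ₗ[k] U) (Coalgebra.counit (R := k)) ∘ₗ R

/-- The right action `h ⊗ u ↦ h ◁ u = ε_U(u^R)h^R`, as a linear map `H ⊗ U → H`. -/
def ract (R : H ⊗[k] U →ₗ[k] U ⊗[k] H) : H ⊗[k] U →ₗ[k] H :=
  (TensorProduct.lid k H).toLinearMap ∘ₗ
    TensorProduct.map (Coalgebra.counit (R := k)) (LinearMap.id : H →ₗ[k] H) ∘ₗ R

variable {B : Type*} [Ring B] [Algebra k B]

/-- The map `h ↦ ε^η_h = η(h₍₁₎)η(S(h₍₂₎))`, as a linear map `H →ₗ[k] B`. -/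
def epsPi (η : H →ₗ[k] B) : H →ₗ[k] B :=
  LinearMap.mul' k B ∘ₗ
    TensorProduct.map η (η ∘ₗ HopfAlgebra.antipode (R := k)) ∘ₗ Coalgebra.comul

/-- A partial representation of the Hopf algebra `H` on a unital algebra `B`. -/
structure IsPartialRep (η : H →ₗ[k] B) : Prop where
  map_one : η 1 = 1
  pr2 : ∀ h : H,
    LinearMap.mulLeft k (η h) ∘ₗ epsPi η =
      LinearMap.mul' k B ∘ₗ
        TensorProduct.map (η ∘ₗ LinearMap.mulLeft k h)
          (η ∘ₗ HopfAlgebra.antipode (R := k)) ∘ₗ Coalgebra.comul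
  pr3 : ∀ g : H,
    LinearMap.mulRight k (η g) ∘ₗ epsPi η =
      LinearMap.mul' k B ∘ₗ
        TensorProduct.map η
          (η ∘ₗ LinearMap.mulRight k g ∘ₗ HopfAlgebra.antipode (R := k)) ∘ₗ Coalgebra.comul

/-- The linear map `π : U ⊗ H → B`, `π(u ⊗ h) = α(u)η(h)`. -/
def piMap (α : U →ₐ[k] B) (η : H →ₗ[k] B) : U ⊗[k] H →ₗ[k] B :=
  LinearMap.mul' k B ∘ₗ TensorProduct.map α.toLinearMap η

/-- Left multiplication by `v ⊗ g` in the smash product `U #_R H`: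
`x ⊗ y ↦ v·x^r ⊗ g^r·y` (where `r` is applied to `g ⊗ x`). -/
def smashMulLeft (R : H ⊗[k] U →ₗ[k] U ⊗[k] H) (v : U) (g : H) :
    U ⊗[k] H →ₗ[k] U ⊗[k] H :=
  TensorProduct.map (LinearMap.mulLeft k v) (LinearMap.mul' k H) ∘ₗ
    (TensorProduct.assoc k U H H).toLinearMap ∘ₗ
    TensorProduct.map (R ∘ₗ TensorProduct.mk k H U g) (LinearMap.id : H →ₗ[k] H)

section Helpers

set_option synthInstance.maxHeartbeats 1000000
set_option maxHeartbeats 4000000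

open Coalgebra HopfAlgebra

variable (R : H ⊗[k] U →ₗ[k] U ⊗[k] H) (α : U →ₐ[k] B) (η : H →ₗ[k] B)

/-- `θ(t ⊗ u)` : right multiplication of `t ∈ U ⊗ H` by `u ⊗ 1` in the smash product. -/
def thetaM : (U ⊗[k] H) ⊗[k] U →ₗ[k] U ⊗[k] H :=
  TensorProduct.map (LinearMap.mul' k U) (LinearMap.id : H →ₗ[k] H) ∘ₗ
    (TensorProduct.assoc k U U H).symm.toLinearMap ∘ₗ
    TensorProduct.map (LinearMap.id : U →ₗ[k] U) R ∘ₗ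
    (TensorProduct.assoc k U H U).toLinearMap

def xiM : H ⊗[k] (U ⊗[k] H) →ₗ[k] U ⊗[k] H :=
  TensorProduct.map (LinearMap.id : U →ₗ[k] U) (LinearMap.mul' k H) ∘ₗ
    (TensorProduct.assoc k U H H).toLinearMap ∘ₗ
    TensorProduct.map R (LinearMap.id : H →ₗ[k] H) ∘ₗ
    (TensorProduct.assoc k H U H).symm.toLinearMap

lemma map_map_elt {P Q P' Q' P'' Q'' : Type*} [AddCommMonoid P] [AddCommMonoid Q]
    [AddCommMonoid P'] [AddCommMonoid Q'] [AddCommMonoid P''] [AddCommMonoid Q'']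
    [Module k P] [Module k Q] [Module k P'] [Module k Q'] [Module k P''] [Module k Q'']
    (f₂ : P' →ₗ[k] P'') (f₁ : P →ₗ[k] P') (g₂ : Q' →ₗ[k] Q'') (g₁ : Q →ₗ[k] Q')
    (z : P ⊗[k] Q) :
    TensorProduct.map f₂ g₂ (TensorProduct.map f₁ g₁ z) =
      TensorProduct.map (f₂ ∘ₗ f₁) (g₂ ∘ₗ g₁) z := by
  rw [TensorProduct.map_comp]; rfl

lemma thetaM_tmul (a : U) (b : H) (u : U) :
    thetaM R ((a ⊗ₜ[k] b) ⊗ₜ[k] u) =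
      TensorProduct.map (LinearMap.mulLeft k a) LinearMap.id (R (b ⊗ₜ[k] u)) := by
  simp only [thetaM, LinearMap.comp_apply, LinearEquiv.coe_coe, assoc_tmul, map_tmul,
    LinearMap.id_apply]
  induction R (b ⊗ₜ[k] u) using TensorProduct.induction_on with
  | zero => simp only [tmul_zero, map_zero]
  | tmul x y => simp [LinearMap.mul'_apply]
  | add s t hs ht => simp only [tmul_add, map_add, hs, ht]

lemma xiM_tmul (y : H) (p : U) (q : H) :
    xiM R (y ⊗ₜ[k] (p ⊗ₜ[k] q)) =
      TensorProduct.map LinearMap.id (LinearMap.mulRight k q) (R (y ⊗ₜ[k] p)) := by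
  simp only [xiM, LinearMap.comp_apply, LinearEquiv.coe_coe, assoc_symm_tmul, map_tmul,
    LinearMap.id_apply]
  induction R (y ⊗ₜ[k] p) using TensorProduct.induction_on with
  | zero => simp only [zero_tmul, map_zero]
  | tmul x y => simp [LinearMap.mul'_apply]
  | add s t hs ht => simp only [add_tmul, map_add, hs, ht]

lemma piMap_tmul (x : U) (y : H) : piMap α η (x ⊗ₜ[k] y) = α x * η y := by
  simp [piMap, LinearMap.mul'_apply]

lemma mulLeft_piMap (a : U) (t : U ⊗[k] H) :
    α a * piMap α η t =
      piMap α η (TensorProduct.map (LinearMap.mulLeft k a) LinearMap.id t) := by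
  induction t using TensorProduct.induction_on with
  | zero => simp
  | tmul x y => simp [piMap_tmul, map_mul, mul_assoc]
  | add s t hs ht => simp only [map_add, mul_add, hs, ht]

lemma compat_elt
    (hcompat : LinearMap.mul' k B ∘ₗ TensorProduct.map η α.toLinearMap =
      LinearMap.mul' k B ∘ₗ TensorProduct.map α.toLinearMap η ∘ₗ R)
    (x : H) (u : U) :
    η x * α u = piMap α η (R (x ⊗ₜ[k] u)) := by
  have h := LinearMap.congr_fun hcompat (x ⊗ₜ[k] u)
  simpa [piMap, LinearMap.mul'_apply] using h

lemma piMap_mul_alpha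
    (hcompat : LinearMap.mul' k B ∘ₗ TensorProduct.map η α.toLinearMap =
      LinearMap.mul' k B ∘ₗ TensorProduct.map α.toLinearMap η ∘ₗ R)
    (t : U ⊗[k] H) (u : U) :
    piMap α η t * α u = piMap α η (thetaM R (t ⊗ₜ[k] u)) := by
  induction t using TensorProduct.induction_on with
  | zero => simp
  | tmul a b =>
      rw [piMap_tmul, thetaM_tmul, mul_assoc, compat_elt R α η hcompat b u,
        mulLeft_piMap]
  | add s t hs ht => simp only [add_tmul, map_add, add_mul, hs, ht]

lemma thetaM_R (hrm : RightMult R) (x : H) (c d : U) :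
    thetaM R (R (x ⊗ₜ[k] c) ⊗ₜ[k] d) = R (x ⊗ₜ[k] (c * d)) := by
  have h := LinearMap.congr_fun hrm (x ⊗ₜ[k] (c ⊗ₜ[k] d))
  simp only [LinearMap.comp_apply, map_tmul, LinearMap.id_apply, LinearMap.mul'_apply,
    LinearEquiv.coe_coe, assoc_symm_tmul] at h
  rw [h]; rfl

lemma xiM_R (hlm : LeftMult R) (x y : H) (u : U) :
    R ((x * y) ⊗ₜ[k] u) = xiM R (x ⊗ₜ[k] R (y ⊗ₜ[k] u)) := by
  have h := LinearMap.congr_fun hlm ((x ⊗ₜ[k] y) ⊗ₜ[k] u)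
  simp only [LinearMap.comp_apply, map_tmul, LinearMap.id_apply, LinearMap.mul'_apply,
    LinearEquiv.coe_coe, assoc_tmul] at h
  rw [h]; rfl

lemma smashMulLeft_tmul (v : U) (g : H) (x : U) (y : H) :
    smashMulLeft R v g (x ⊗ₜ[k] y) =
      TensorProduct.map (LinearMap.mulLeft k v) (LinearMap.mulRight k y)
        (R (g ⊗ₜ[k] x)) := by
  simp only [smashMulLeft, LinearMap.comp_apply, map_tmul, LinearMap.id_apply,
    LinearEquiv.coe_coe, mk_apply]
  induction R (g ⊗ₜ[k] x) using TensorProduct.induction_on with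
  | zero => simp only [zero_tmul, map_zero]
  | tmul m n => simp [LinearMap.mul'_apply]
  | add s t hs ht => simp only [add_tmul, map_add, hs, ht]

/-- The common value `W(t ⊗ s)`: for `t = x ⊗ y`, `s = p ⊗ q` it is
`(v·x·(R(y⊗p))_U) ⊗ ((R(y⊗p))_H · q)`. -/
def Wv (v : U) : (U ⊗[k] H) ⊗[k] (U ⊗[k] H) →ₗ[k] U ⊗[k] H :=
  TensorProduct.map (LinearMap.mulLeft k v ∘ₗ LinearMap.mul' k U) (LinearMap.mul' k H) ∘ₗ
    (TensorProduct.assoc k U U (H ⊗[k] H)).symm.toLinearMap ∘ₗ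
    TensorProduct.map (LinearMap.id : U →ₗ[k] U) (TensorProduct.assoc k U H H).toLinearMap ∘ₗ
    TensorProduct.map (LinearMap.id : U →ₗ[k] U)
      (TensorProduct.map R (LinearMap.id : H →ₗ[k] H)) ∘ₗ
    TensorProduct.map (LinearMap.id : U →ₗ[k] U)
      (TensorProduct.assoc k H U H).symm.toLinearMap ∘ₗ
    (TensorProduct.assoc k U H (U ⊗[k] H)).toLinearMap

lemma Wv_tmul (v : U) (x : U) (y : H) (p : U) (q : H) :
    Wv R v ((x ⊗ₜ[k] y) ⊗ₜ[k] (p ⊗ₜ[k] q)) =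
      TensorProduct.map (LinearMap.mulLeft k (v * x)) (LinearMap.mulRight k q)
        (R (y ⊗ₜ[k] p)) := by
  simp only [Wv, LinearMap.comp_apply, LinearEquiv.coe_coe, assoc_tmul, map_tmul,
    LinearMap.id_apply, assoc_symm_tmul]
  induction R (y ⊗ₜ[k] p) using TensorProduct.induction_on with
  | zero => simp only [zero_tmul, tmul_zero, map_zero]
  | tmul m n => simp [LinearMap.mul'_apply, mul_assoc]
  | add s t hs ht =>
      simp only [add_tmul, tmul_add, map_add, hs, ht]

lemma C3L (hlm : LeftMult R) (v : U) (g : H) (t₁ : U ⊗[k] H) (b : H) (d : U) :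
    thetaM R (TensorProduct.map (LinearMap.mulLeft k v) (LinearMap.mulRight k b) t₁ ⊗ₜ[k] d) =
      Wv R v (t₁ ⊗ₜ[k] R (b ⊗ₜ[k] d)) := by
  induction t₁ using TensorProduct.induction_on with
  | zero => simp only [map_zero, zero_tmul]
  | tmul x y =>
      simp only [map_tmul, LinearMap.mulLeft_apply, LinearMap.mulRight_apply]
      rw [thetaM_tmul, xiM_R R hlm y b d]
      induction R (b ⊗ₜ[k] d) using TensorProduct.induction_on with
      | zero => simp only [tmul_zero, map_zero]
      | tmul p q =>
          rw [xiM_tmul, Wv_tmul, map_map_elt, LinearMap.comp_id, LinearMap.id_comp]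
      | add s t hs ht => simp only [tmul_add, map_add, hs, ht]
  | add s t hs ht => simp only [map_add, add_tmul, hs, ht]

lemma C3R (hrm : RightMult R) (v : U) (g : H) (s : U ⊗[k] H) (a : U) :
    smashMulLeft R v g (TensorProduct.map (LinearMap.mulLeft k a) LinearMap.id s) =
      Wv R v (R (g ⊗ₜ[k] a) ⊗ₜ[k] s) := by
  induction s using TensorProduct.induction_on with
  | zero => simp only [map_zero, tmul_zero]
  | tmul p q =>
      simp only [map_tmul, LinearMap.mulLeft_apply, LinearMap.id_apply]
      rw [smashMulLeft_tmul, ← thetaM_R R hrm g a p]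
      induction R (g ⊗ₜ[k] a) using TensorProduct.induction_on with
      | zero => simp only [zero_tmul, map_zero]
      | tmul x y =>
          rw [thetaM_tmul, Wv_tmul]
          induction R (y ⊗ₜ[k] p) using TensorProduct.induction_on with
          | zero => simp only [map_zero]
          | tmul m n => simp [mul_assoc]
          | add s t hs ht => simp only [map_add, hs, ht]
      | add s t hs ht => simp only [add_tmul, map_add, hs, ht]
  | add s t hs ht => simp only [map_add, tmul_add, hs, ht]

lemma hc_smash (hlm : LeftMult R) (hrm : RightMult R) (v : U) (g : H)
    (t : U ⊗[k] H) (d : U) :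
    thetaM R (smashMulLeft R v g t ⊗ₜ[k] d) =
      smashMulLeft R v g (thetaM R (t ⊗ₜ[k] d)) := by
  induction t using TensorProduct.induction_on with
  | zero => simp only [map_zero, zero_tmul]
  | tmul a b =>
      rw [smashMulLeft_tmul, thetaM_tmul, C3L R hlm v g _ b d, C3R R hrm v g _ a]
  | add s t hs ht => simp only [map_add, add_tmul, hs, ht]

lemma keyc (hln : LeftNormal R) (hrm : RightMult R)
    (hcompat : LinearMap.mul' k B ∘ₗ TensorProduct.map η α.toLinearMap =
      LinearMap.mul' k B ∘ₗ TensorProduct.map α.toLinearMap η ∘ₗ R)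
    (c : U ⊗[k] H →ₗ[k] U ⊗[k] H)
    (hc : ∀ (t : U ⊗[k] H) (d : U), thetaM R (c t ⊗ₜ[k] d) = c (thetaM R (t ⊗ₜ[k] d)))
    (u : U) (ru : Coalgebra.Repr k u (U × U)) (x : H) (b : H) :
    ∑ j ∈ ru.index,
      piMap α η (c (R (x ⊗ₜ[k] antipode (R := k) (ru.left j)))) *
        (α (ru.right j) * η b)
    = counit (R := k) u • (piMap α η (c ((1:U) ⊗ₜ[k] x)) * η b) := by
  have step : ∀ j ∈ ru.index,
      piMap α η (c (R (x ⊗ₜ[k] antipode (R := k) (ru.left j)))) * (α (ru.right j) * η b)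
      = piMap α η (c (R (x ⊗ₜ[k] (antipode (R := k) (ru.left j) * ru.right j)))) * η b := by
    intro j _
    rw [← mul_assoc, piMap_mul_alpha R α η hcompat, hc, thetaM_R R hrm]
  rw [Finset.sum_congr rfl step]
  have hsum : ∑ j ∈ ru.index,
      piMap α η (c (R (x ⊗ₜ[k] (antipode (R := k) (ru.left j) * ru.right j)))) * η b
      = piMap α η (c (R (x ⊗ₜ[k]
          (∑ j ∈ ru.index, antipode (R := k) (ru.left j) * ru.right j)))) * η b := by
    rw [tmul_sum, map_sum, map_sum, map_sum, Finset.sum_mul]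
  rw [hsum, HopfAlgebra.sum_antipode_mul_eq_algebraMap_counit ru]
  simp only [Algebra.algebraMap_eq_smul_one, tmul_smul, map_smul, smul_mul_assoc, hln x]

lemma sum_counit_smul_left (m : H) (rm : Coalgebra.Repr k m (H × H)) :
    ∑ i ∈ rm.index, counit (R := k) (rm.right i) • rm.left i = m := by
  have h := congrArg (TensorProduct.rid k H) (Coalgebra.sum_tmul_counit_eq rm)
  simp only [map_sum, TensorProduct.rid_tmul] at h
  simpa using h

lemma sum_counit_smul_right (m : H) (rm : Coalgebra.Repr k m (H × H)) :
    ∑ i ∈ rm.index, counit (R := k) (rm.left i) • rm.right i = m := by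
  have h := congrArg (TensorProduct.lid k H) (Coalgebra.sum_counit_tmul_eq rm)
  simp only [map_sum, TensorProduct.lid_tmul] at h
  simpa using h

lemma epsPi_repr (m : H) (rm : Coalgebra.Repr k m (H × H)) :
    epsPi η m = ∑ i ∈ rm.index, η (rm.left i) * η (antipode (R := k) (rm.right i)) := by
  simp only [epsPi, LinearMap.comp_apply, ← rm.eq, map_sum, map_tmul,
    LinearMap.mul'_apply]

lemma eta_algebraMap (hη : IsPartialRep η) (c : k) :
    η (algebraMap k H c) = algebraMap k B c := by
  rw [Algebra.algebraMap_eq_smul_one, map_smul, hη.map_one,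
    ← Algebra.algebraMap_eq_smul_one]

lemma pr2_elt (hη : IsPartialRep η) (x : H) (m : H) (rm : Coalgebra.Repr k m (H × H)) :
    η x * epsPi η m
      = ∑ i ∈ rm.index, η (x * rm.left i) * η (antipode (R := k) (rm.right i)) := by
  have h := LinearMap.congr_fun (hη.pr2 x) m
  simpa only [LinearMap.comp_apply, LinearMap.mulLeft_apply, ← rm.eq, map_sum,
    map_tmul, LinearMap.mul'_apply] using h

lemma pr3_elt (hη : IsPartialRep η) (m : H) (rm : Coalgebra.Repr k m (H × H)) (y : H) :
    epsPi η m * η y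
      = ∑ i ∈ rm.index, η (rm.left i) * η (antipode (R := k) (rm.right i) * y) := by
  have h := LinearMap.congr_fun (hη.pr3 y) m
  simpa only [LinearMap.comp_apply, LinearMap.mulRight_apply, ← rm.eq, map_sum,
    map_tmul, LinearMap.mul'_apply] using h

lemma Ftilde (hη : IsPartialRep η) (m : H) (rm : Coalgebra.Repr k m (H × H))
    (rr : ∀ j : rm.ι, Coalgebra.Repr k (rm.right j) (H × H)) :
    ∑ j ∈ rm.index, ∑ l ∈ (rr j).index,
      η (rm.left j) * (η (antipode (R := k) ((rr j).left l)) * η ((rr j).right l))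
    = η m := by
  classical
  set rl : ∀ j : rm.ι, Coalgebra.Repr k (rm.left j) (H × H) := fun j => ℛ k (rm.left j) with hrl
  set rr2 : ∀ j : rm.ι, Coalgebra.Repr k (rm.right j) (H × H) := fun j => ℛ k (rm.right j) with hrr2
  have coas := Coalgebra.sum_tmul_tmul_eq rm rl rr
  have h1 := congrArg (LinearMap.mul' k B ∘ₗ TensorProduct.map η
      (LinearMap.mul' k B ∘ₗ TensorProduct.map (η ∘ₗ HopfAlgebra.antipode (R := k)) η)) coas
  simp only [map_sum, LinearMap.comp_apply, map_tmul, LinearMap.mul'_apply] at h1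
  rw [← h1]
  have step : ∀ j ∈ rm.index,
      ∑ l ∈ (rl j).index,
        η ((rl j).left l) * (η (antipode (R := k) ((rl j).right l)) * η (rm.right j))
      = ∑ l ∈ (rl j).index,
        η ((rl j).left l) * η (antipode (R := k) ((rl j).right l) * rm.right j) := by
    intro j _
    calc ∑ l ∈ (rl j).index,
            η ((rl j).left l) * (η (antipode (R := k) ((rl j).right l)) * η (rm.right j))
        = (∑ l ∈ (rl j).index,
            η ((rl j).left l) * η (antipode (R := k) ((rl j).right l))) * η (rm.right j) := by
          rw [Finset.sum_mul]
          exact Finset.sum_congr rfl fun l _ => (mul_assoc _ _ _).symm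
      _ = epsPi η (rm.left j) * η (rm.right j) := by rw [epsPi_repr η _ (rl j)]
      _ = _ := pr3_elt η hη _ (rl j) _
  rw [Finset.sum_congr rfl step]
  have coas2 := Coalgebra.sum_tmul_tmul_eq rm rl rr2
  have h2 := congrArg (LinearMap.mul' k B ∘ₗ TensorProduct.map η
      (η ∘ₗ LinearMap.mul' k H ∘ₗ
        TensorProduct.map (HopfAlgebra.antipode (R := k)) LinearMap.id)) coas2
  simp only [map_sum, LinearMap.comp_apply, map_tmul, LinearMap.mul'_apply,
    LinearMap.id_apply] at h2
  rw [h2]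
  have step2 : ∀ j ∈ rm.index,
      ∑ l ∈ (rr2 j).index,
        η (rm.left j) * η (antipode (R := k) ((rr2 j).left l) * (rr2 j).right l)
      = counit (R := k) (rm.right j) • η (rm.left j) := by
    intro j _
    rw [← Finset.mul_sum, ← map_sum, HopfAlgebra.sum_antipode_mul_eq_algebraMap_counit (rr2 j),
      eta_algebraMap η hη, Algebra.algebraMap_eq_smul_one, mul_smul_comm, mul_one]
  rw [Finset.sum_congr rfl step2]
  calc ∑ j ∈ rm.index, counit (R := k) (rm.right j) • η (rm.left j)
      = η (∑ j ∈ rm.index, counit (R := k) (rm.right j) • rm.left j) := by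
        simp only [map_sum, map_smul]
    _ = η m := by rw [sum_counit_smul_left]

lemma collapse4 (Φ : H ⊗[k] (H ⊗[k] H) →ₗ[k] B) (h : H) (r : Coalgebra.Repr k h (H × H))
    (rb : ∀ i : r.ι, Coalgebra.Repr k (r.right i) (H × H))
    (rc : ∀ i (j : (rb i).ι), Coalgebra.Repr k ((rb i).left j) (H × H)) :
    ∑ i ∈ r.index, ∑ j ∈ (rb i).index, ∑ l ∈ (rc i j).index,
      Φ ((antipode (R := k) (r.left i) * (rc i j).left l) ⊗ₜ[k]
        ((rc i j).right l ⊗ₜ[k] (rb i).right j))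
    = Φ ((1:H) ⊗ₜ[k] Coalgebra.comul (R := k) h) := by
  classical
  set rd : ∀ i (j : (rb i).ι), Coalgebra.Repr k ((rb i).right j) (H × H) :=
    fun i j => ℛ k ((rb i).right j) with hrd
  set rA : ∀ i : r.ι, Coalgebra.Repr k (r.left i) (H × H) := fun i => ℛ k (r.left i) with hrA
  set Φ₂ : H ⊗[k] H →ₗ[k] B :=
    Φ ∘ₗ LinearMap.lTensor H (Coalgebra.comul (R := k)) with hPhi2
  have step1 : ∀ i ∈ r.index,
      ∑ j ∈ (rb i).index, ∑ l ∈ (rc i j).index,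
        Φ ((antipode (R := k) (r.left i) * (rc i j).left l) ⊗ₜ[k]
          ((rc i j).right l ⊗ₜ[k] (rb i).right j))
      = ∑ j ∈ (rb i).index,
          Φ₂ ((antipode (R := k) (r.left i) * (rb i).left j) ⊗ₜ[k] (rb i).right j) := by
    intro i _
    have coas := Coalgebra.sum_tmul_tmul_eq (rb i) (rc i) (rd i)
    have h1 := congrArg (Φ ∘ₗ TensorProduct.map
      (LinearMap.mulLeft k (antipode (R := k) (r.left i))) LinearMap.id) coas
    simp only [map_sum, LinearMap.comp_apply, map_tmul, LinearMap.mulLeft_apply,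
      LinearMap.id_apply] at h1
    rw [h1]
    refine Finset.sum_congr rfl fun j _ => ?_
    calc ∑ l ∈ (rd i j).index,
            Φ ((antipode (R := k) (r.left i) * (rb i).left j) ⊗ₜ[k]
              ((rd i j).left l ⊗ₜ[k] (rd i j).right l))
        = Φ ((antipode (R := k) (r.left i) * (rb i).left j) ⊗ₜ[k]
            (∑ l ∈ (rd i j).index, (rd i j).left l ⊗ₜ[k] (rd i j).right l)) := by
          rw [tmul_sum, map_sum]
      _ = _ := by rw [(rd i j).eq, hPhi2]; simp [LinearMap.lTensor_tmul]
  rw [Finset.sum_congr rfl step1]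
  have coasT := Coalgebra.sum_tmul_tmul_eq r rA rb
  have h3 := congrArg (Φ₂ ∘ₗ TensorProduct.map
      (LinearMap.mul' k H ∘ₗ TensorProduct.map (antipode (R := k)) LinearMap.id)
      LinearMap.id ∘ₗ (TensorProduct.assoc k H H H).symm.toLinearMap) coasT
  simp only [map_sum, LinearMap.comp_apply, LinearEquiv.coe_coe, assoc_symm_tmul,
    map_tmul, LinearMap.mul'_apply, LinearMap.id_apply] at h3
  rw [← h3]
  have step3 : ∀ i ∈ r.index,
      ∑ j ∈ (rA i).index,
        Φ₂ ((antipode (R := k) ((rA i).left j) * (rA i).right j) ⊗ₜ[k] r.right i)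
      = counit (R := k) (r.left i) • Φ₂ ((1:H) ⊗ₜ[k] r.right i) := by
    intro i _
    calc ∑ j ∈ (rA i).index,
          Φ₂ ((antipode (R := k) ((rA i).left j) * (rA i).right j) ⊗ₜ[k] r.right i)
        = Φ₂ ((∑ j ∈ (rA i).index, antipode (R := k) ((rA i).left j) * (rA i).right j)
            ⊗ₜ[k] r.right i) := by rw [sum_tmul, map_sum]
      _ = Φ₂ (algebraMap k H (counit (R := k) (r.left i)) ⊗ₜ[k] r.right i) := by
          rw [HopfAlgebra.sum_antipode_mul_eq_algebraMap_counit (rA i)]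
      _ = _ := by
          rw [Algebra.algebraMap_eq_smul_one, ← smul_tmul', map_smul]
  rw [Finset.sum_congr rfl step3]
  calc ∑ i ∈ r.index, counit (R := k) (r.left i) • Φ₂ ((1:H) ⊗ₜ[k] r.right i)
      = Φ₂ ((1:H) ⊗ₜ[k] (∑ i ∈ r.index, counit (R := k) (r.left i) • r.right i)) := by
        simp only [tmul_sum, tmul_smul, map_sum, map_smul]
    _ = Φ₂ ((1:H) ⊗ₜ[k] h) := by rw [sum_counit_smul_right]
    _ = Φ ((1:H) ⊗ₜ[k] Coalgebra.comul (R := k) h) := by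
        rw [hPhi2]; simp [LinearMap.lTensor_tmul]

lemma pr4_elt (hη : IsPartialRep η) (g : H) (h : H) (r : Coalgebra.Repr k h (H × H)) :
    ∑ i ∈ r.index, η (g * antipode (R := k) (r.left i)) * η (r.right i)
      = η g * ∑ i ∈ r.index, η (antipode (R := k) (r.left i)) * η (r.right i) := by
  classical
  set rb : ∀ i : r.ι, Coalgebra.Repr k (r.right i) (H × H) := fun i => ℛ k (r.right i) with hrb
  set rd : ∀ i (j : (rb i).ι), Coalgebra.Repr k ((rb i).right j) (H × H) :=
    fun i j => ℛ k ((rb i).right j) with hrd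
  set rc : ∀ i (j : (rb i).ι), Coalgebra.Repr k ((rb i).left j) (H × H) :=
    fun i j => ℛ k ((rb i).left j) with hrc
  -- Step 1: expand η(r.right i) with Ftilde, then regroup by coassociativity
  have step1 : ∀ i ∈ r.index,
      η (g * antipode (R := k) (r.left i)) * η (r.right i)
      = ∑ j ∈ (rb i).index, ∑ l ∈ (rc i j).index,
          (η (g * antipode (R := k) (r.left i) * (rc i j).left l) *
            η (antipode (R := k) ((rc i j).right l))) * η ((rb i).right j) := by
    intro i _
    rw [← Ftilde η hη _ (rb i) (rd i), Finset.mul_sum]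
    have coas := Coalgebra.sum_tmul_tmul_eq (rb i) (rc i) (rd i)
    have h1 := congrArg (LinearMap.mul' k B ∘ₗ TensorProduct.map η
        (LinearMap.mul' k B ∘ₗ
          TensorProduct.map (η ∘ₗ HopfAlgebra.antipode (R := k)) η)) coas
    simp only [map_sum, LinearMap.comp_apply, map_tmul, LinearMap.mul'_apply] at h1
    rw [← Finset.mul_sum, ← h1, Finset.mul_sum]
    -- now: Σ_j κ * Σ_l η(p)*(η(S q)*η(d)) = Σ_j Σ_l (η(g*Sa*p)*η(Sq))*η(d)
    refine Finset.sum_congr rfl fun j _ => ?_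
    rw [Finset.mul_sum]
    have inner : ∑ l ∈ (rc i j).index,
        η ((rc i j).left l) * (η (antipode (R := k) ((rc i j).right l))
          * η ((rb i).right j))
        = epsPi η ((rb i).left j) * η ((rb i).right j) := by
      rw [epsPi_repr η _ (rc i j), Finset.sum_mul]
      exact Finset.sum_congr rfl fun l _ => (mul_assoc _ _ _).symm
    rw [← Finset.mul_sum, inner, ← mul_assoc,
      pr2_elt η hη (g * antipode (R := k) (r.left i)) _ (rc i j), Finset.sum_mul]
  rw [Finset.sum_congr rfl step1]
  -- Step 2: apply collapse4
  have key := collapse4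
    (LinearMap.mul' k B ∘ₗ TensorProduct.map
      (LinearMap.mul' k B ∘ₗ
        TensorProduct.map (η ∘ₗ LinearMap.mulLeft k g) (η ∘ₗ HopfAlgebra.antipode (R := k)))
      η ∘ₗ (TensorProduct.assoc k H H H).symm.toLinearMap) h r rb rc
  simp only [LinearMap.comp_apply, LinearEquiv.coe_coe, assoc_symm_tmul, map_tmul,
    LinearMap.mul'_apply, LinearMap.mulLeft_apply] at key
  have lhs_eq : ∑ i ∈ r.index, ∑ j ∈ (rb i).index, ∑ l ∈ (rc i j).index,
      (η (g * antipode (R := k) (r.left i) * (rc i j).left l) *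
        η (antipode (R := k) ((rc i j).right l))) * η ((rb i).right j)
      = ∑ i ∈ r.index, ∑ j ∈ (rb i).index, ∑ l ∈ (rc i j).index,
      (η (g * (antipode (R := k) (r.left i) * (rc i j).left l)) *
        η (antipode (R := k) ((rc i j).right l))) * η ((rb i).right j) := by
    refine Finset.sum_congr rfl fun i _ => Finset.sum_congr rfl fun j _ =>
      Finset.sum_congr rfl fun l _ => ?_
    rw [mul_assoc g (antipode (R := k) (r.left i)) ((rc i j).left l)]
  rw [lhs_eq]
  rw [key]
  rw [← r.eq]
  simp only [tmul_sum, map_sum, LinearEquiv.coe_coe, assoc_symm_tmul, LinearMap.comp_apply,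
    map_tmul, LinearMap.mul'_apply, LinearMap.mulLeft_apply, mul_one]
  rw [Finset.mul_sum]
  exact Finset.sum_congr rfl fun i _ => (mul_assoc _ _ _)

end Helpers

/-- STATEMENT 19: let `R : H ⊗ U → U ⊗ H` be a normal, multiplicative coalgebra map,
`α : U → B` an algebra homomorphism and `η : H → B` a partial representation such that
`η(h)α(u) = α(u^R)η(h^R)` for all `u, h`. Let `π(u ⊗ h) = α(u)η(h)`. Then for all
`v ∈ U`, `g ∈ H` (and with `u ⊗ h` the varying argument):
`π(v ⊗ g)·π(S_U(u₍₁₎)^R ⊗ S_H(h₍₁₎)^R)·π(u₍₂₎ ⊗ h₍₂₎)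
  = π(v·S_U(u₍₁₎)^{Rr} ⊗ g^r·S_H(h₍₁₎)^R)·π(u₍₂₎ ⊗ h₍₂₎)`,
which is axiom (PR4) of a partial representation for the smash product `U #_R H`. -/
theorem smash_pr4 (R : H ⊗[k] U →ₗ[k] U ⊗[k] H)
    (hln : LeftNormal R) (hrn : RightNormal R)
    (hlm : LeftMult R) (hrm : RightMult R) (hcm : IsCoalgMap R)
    (α : U →ₐ[k] B) (η : H →ₗ[k] B) (hη : IsPartialRep η)
    (hcompat : LinearMap.mul' k B ∘ₗ TensorProduct.map η α.toLinearMap =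
      LinearMap.mul' k B ∘ₗ TensorProduct.map α.toLinearMap η ∘ₗ R) :
    ∀ (v : U) (g : H),
      LinearMap.mulLeft k (piMap α η (v ⊗ₜ[k] g)) ∘ₗ
        LinearMap.mul' k B ∘ₗ
        TensorProduct.map
          (piMap α η ∘ₗ R ∘ₗ
            TensorProduct.map (HopfAlgebra.antipode (R := k) (A := H))
              (HopfAlgebra.antipode (R := k) (A := U)))
          (piMap α η ∘ₗ (TensorProduct.comm k H U).toLinearMap) ∘ₗ
        comulTP k H U =
      LinearMap.mul' k B ∘ₗ
        TensorProduct.map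
          (piMap α η ∘ₗ smashMulLeft R v g ∘ₗ R ∘ₗ
            TensorProduct.map (HopfAlgebra.antipode (R := k) (A := H))
              (HopfAlgebra.antipode (R := k) (A := U)))
          (piMap α η ∘ₗ (TensorProduct.comm k H U).toLinearMap) ∘ₗ
        comulTP k H U := by
  intro v g
  apply TensorProduct.ext'
  intro h u
  classical
  set r := Coalgebra.Repr.arbitrary k h with hr
  set ru := Coalgebra.Repr.arbitrary k u with hru
  have hct : comulTP k H U (h ⊗ₜ[k] u) = ∑ i ∈ r.index, ∑ j ∈ ru.index,
      (r.left i ⊗ₜ[k] ru.left j) ⊗ₜ[k] (r.right i ⊗ₜ[k] ru.right j) := by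
    simp only [comulTP, LinearMap.comp_apply, map_tmul, ← r.eq, ← ru.eq, sum_tmul,
      tmul_sum, map_sum, LinearEquiv.coe_coe, tensorTensorTensorComm_tmul]
    exact Finset.sum_comm
  simp only [LinearMap.comp_apply, hct, map_sum, map_tmul, LinearMap.mul'_apply,
    LinearMap.mulLeft_apply, LinearEquiv.coe_coe, comm_tmul, piMap_tmul]
  have keyL : ∀ i ∈ r.index,
      ∑ j ∈ ru.index,
        piMap α η (R (HopfAlgebra.antipode (R := k) (r.left i) ⊗ₜ[k]
          HopfAlgebra.antipode (R := k) (ru.left j))) *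
          (α (ru.right j) * η (r.right i))
      = Coalgebra.counit (R := k) u •
          (η (HopfAlgebra.antipode (R := k) (r.left i)) * η (r.right i)) := by
    intro i _
    have := keyc R α η hln hrm hcompat LinearMap.id (fun t d => rfl) u ru
      (HopfAlgebra.antipode (R := k) (r.left i)) (r.right i)
    simpa only [LinearMap.id_coe, id_eq, piMap_tmul, map_one, one_mul] using this
  have keyR : ∀ i ∈ r.index,
      ∑ j ∈ ru.index,
        piMap α η (smashMulLeft R v g
          (R (HopfAlgebra.antipode (R := k) (r.left i) ⊗ₜ[k]
            HopfAlgebra.antipode (R := k) (ru.left j)))) *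
          (α (ru.right j) * η (r.right i))
      = Coalgebra.counit (R := k) u •
          ((α v * η (g * HopfAlgebra.antipode (R := k) (r.left i))) * η (r.right i)) := by
    intro i _
    have := keyc R α η hln hrm hcompat (smashMulLeft R v g)
      (hc_smash R hlm hrm v g) u ru
      (HopfAlgebra.antipode (R := k) (r.left i)) (r.right i)
    rw [this]
    rw [smashMulLeft_tmul, hln g]
    simp only [map_tmul, LinearMap.mulLeft_apply, LinearMap.mulRight_apply, mul_one,
      piMap_tmul]
  have keyL2 : ∀ i ∈ r.index,
      ∑ j ∈ ru.index, α v * η g *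
        (piMap α η (R (HopfAlgebra.antipode (R := k) (r.left i) ⊗ₜ[k]
          HopfAlgebra.antipode (R := k) (ru.left j))) *
          (α (ru.right j) * η (r.right i)))
      = Coalgebra.counit (R := k) u •
          ((α v * η g) *
            (η (HopfAlgebra.antipode (R := k) (r.left i)) * η (r.right i))) := by
    intro i hi
    rw [← Finset.mul_sum, keyL i hi, mul_smul_comm]
  rw [Finset.sum_congr rfl keyL2, Finset.sum_congr rfl keyR]
  rw [← Finset.smul_sum, ← Finset.smul_sum]
  congr 1
  calc ∑ i ∈ r.index, (α v * η g) *
        (η (HopfAlgebra.antipode (R := k) (r.left i)) * η (r.right i))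
      = (α v * η g) * ∑ i ∈ r.index,
          η (HopfAlgebra.antipode (R := k) (r.left i)) * η (r.right i) :=
        (Finset.mul_sum _ _ _).symm
    _ = α v * (η g * ∑ i ∈ r.index,
          η (HopfAlgebra.antipode (R := k) (r.left i)) * η (r.right i)) := mul_assoc _ _ _
    _ = α v * ∑ i ∈ r.index,
          η (g * HopfAlgebra.antipode (R := k) (r.left i)) * η (r.right i) := by
        rw [← pr4_elt η hη g h r]
    _ = ∑ i ∈ r.index, α v *
          (η (g * HopfAlgebra.antipode (R := k) (r.left i)) * η (r.right i)) :=
        Finset.mul_sum _ _ _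
    _ = ∑ i ∈ r.index, α v *
          η (g * HopfAlgebra.antipode (R := k) (r.left i)) * η (r.right i) :=
        Finset.sum_congr rfl fun i _ => (mul_assoc _ _ _).symm
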